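/- arXiv:2012.13535 — 6 statements merged into one kernel-verified Lean document; each statement's English description precedes it below -/
import Mathlib

section
/- Let H = H1 ⊕ H2 be an orthogonal decomposition of a complex separable Hilbert space H, and let T be a bounded linear operator on H leaving H1 invariant, so that T has the block form [[T1, T3],[0, T2]] where T1 = P_{H1} T|_{H1}, T2 = P_{H2} T|_{H2}, T3 = P_{H1} T|_{H2} (P denoting orthogonal projection). If T belongs to B_{m+n}(Ω) and T1 belongs to B_m(Ω), then T2 belongs to B_n(Ω). -/
open ContinuousLinearMap Submodule

noncomputable section

/-- The Cowen–Douglas class `B_n(Ω)`: `T - ω` is surjective for every `ω ∈ Ω`,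
`ker (T - ω)` has dimension `n`, and the closed linear span of the kernels is the
whole space. -/
def CowenDouglas {H : Type*} [NormedAddCommGroup H] [InnerProductSpace ℂ H]
    (T : H →L[ℂ] H) (Ω : Set ℂ) (n : ℕ) : Prop :=
  (∀ ω ∈ Ω, Function.Surjective (T - ω • (1 : H →L[ℂ] H)) ∧
      Module.finrank ℂ (LinearMap.ker ((T - ω • (1 : H →L[ℂ] H) : H →L[ℂ] H) : H →ₗ[ℂ] H)) = n) ∧
  (⨆ ω ∈ Ω, LinearMap.ker ((T - ω • (1 : H →L[ℂ] H) : H →L[ℂ] H) : H →ₗ[ℂ] H)).topologicalClosure = ⊤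

theorem stmt_0 {H : Type*} [NormedAddCommGroup H] [InnerProductSpace ℂ H]
    [CompleteSpace H] [TopologicalSpace.SeparableSpace H]
    (Ω : Set ℂ) (hΩopen : IsOpen Ω) (hΩbdd : Bornology.IsBounded Ω)
    (m n : ℕ) (hm : 0 < m) (hn : 0 < n)
    (T : H →L[ℂ] H) (H₁ : Submodule ℂ H) [CompleteSpace H₁]
    (hinv : ∀ x ∈ H₁, T x ∈ H₁)
    (hT : CowenDouglas T Ω (m + n))
    (hT1 : CowenDouglas ((orthogonalProjection H₁).comp (T.comp H₁.subtypeL)) Ω m) :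
    CowenDouglas ((orthogonalProjection H₁ᗮ).comp (T.comp H₁ᗮ.subtypeL)) Ω n := by
  -- notation
  have hP2z : ∀ z : H₁ᗮ, (orthogonalProjection H₁ᗮ) (z : H) = z :=
    fun z => orthogonalProjection_mem_subspace_eq_self z
  have hP2H1 : ∀ x ∈ H₁, (orthogonalProjection H₁ᗮ) x = 0 := fun x hx =>
    orthogonalProjection_mem_subspace_orthogonalComplement_eq_zero
      (H₁.le_orthogonal_orthogonal hx)
  -- (a) : S2 z = P₂ (S z)
  have ha : ∀ (ω : ℂ) (z : H₁ᗮ),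
      ((orthogonalProjection H₁ᗮ).comp (T.comp H₁ᗮ.subtypeL) - ω • (1 : H₁ᗮ →L[ℂ] H₁ᗮ)) z
        = (orthogonalProjection H₁ᗮ) ((T - ω • (1 : H →L[ℂ] H)) (z : H)) := by
    intro ω z
    simp [ContinuousLinearMap.sub_apply, ContinuousLinearMap.smul_apply, map_sub, map_smul,
      hP2z z]
  -- S-invariance of H₁
  have hSinv : ∀ (ω : ℂ) (x : H), x ∈ H₁ → (T - ω • (1 : H →L[ℂ] H)) x ∈ H₁ := by
    intro ω x hx
    simpa [ContinuousLinearMap.sub_apply] using H₁.sub_mem (hinv x hx) (H₁.smul_mem ω hx)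
  -- (b) : for x : H₁, (S1 x : H) = S x
  have hb : ∀ (ω : ℂ) (x : H₁),
      ((((orthogonalProjection H₁).comp (T.comp H₁.subtypeL)
            - ω • (1 : H₁ →L[ℂ] H₁)) x : H))
        = (T - ω • (1 : H →L[ℂ] H)) (x : H) := by
    intro ω x
    simp only [ContinuousLinearMap.sub_apply, ContinuousLinearMap.smul_apply,
      ContinuousLinearMap.one_apply, ContinuousLinearMap.comp_apply, Submodule.subtypeL_apply,
      Submodule.coe_sub, Submodule.coe_smul,
      Submodule.coe_orthogonalProjectionOnto_apply, Submodule.starProjection_eq_self_iff.2 (hinv (x : H) x.2)]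
  -- membership lemma: P₂ maps ker S into ker S2
  have hmem : ∀ (ω : ℂ) (x : H), x ∈ LinearMap.ker ((T - ω • (1 : H →L[ℂ] H) : H →L[ℂ] H) : H →ₗ[ℂ] H) →
      (orthogonalProjection H₁ᗮ) x ∈ LinearMap.ker
        (((orthogonalProjection H₁ᗮ).comp (T.comp H₁ᗮ.subtypeL) - ω • (1 : H₁ᗮ →L[ℂ] H₁ᗮ) :
          H₁ᗮ →L[ℂ] H₁ᗮ) : H₁ᗮ →ₗ[ℂ] H₁ᗮ) := by
    intro ω x hx
    have hdec : ((orthogonalProjection H₁ x : H)) + ((orthogonalProjection H₁ᗮ x : H)) = x :=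
      H₁.starProjection_add_starProjection_orthogonal x
    have h2 : ((orthogonalProjection H₁ᗮ x : H)) = x - ((orthogonalProjection H₁ x : H)) := by
      exact eq_sub_of_add_eq' hdec
    rw [LinearMap.mem_ker, ContinuousLinearMap.coe_coe, ha ω, h2, map_sub,
      (show (T - ω • (1 : H →L[ℂ] H)) x = 0 from LinearMap.mem_ker.mp hx), zero_sub, map_neg,
      hP2H1 _ (hSinv ω _ (orthogonalProjection H₁ x).2), neg_zero]
  constructor
  · intro ω hω
    obtain ⟨hSsurj, hSker⟩ := hT.1 ω hω
    obtain ⟨hS1surj, hS1ker⟩ := hT1.1 ω hω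
    -- surjectivity of S2
    have hS2surj : Function.Surjective
        ((orthogonalProjection H₁ᗮ).comp (T.comp H₁ᗮ.subtypeL) - ω • (1 : H₁ᗮ →L[ℂ] H₁ᗮ)) := by
      intro y
      obtain ⟨x, hx⟩ := hSsurj (y : H)
      refine ⟨orthogonalProjection H₁ᗮ x, ?_⟩
      have hdec : ((orthogonalProjection H₁ x : H)) + ((orthogonalProjection H₁ᗮ x : H)) = x :=
        H₁.starProjection_add_starProjection_orthogonal x
      have h2 : ((orthogonalProjection H₁ᗮ x : H)) = x - ((orthogonalProjection H₁ x : H)) :=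
        eq_sub_of_add_eq' hdec
      rw [ha ω, h2, map_sub, map_sub, hx,
        hP2H1 _ (hSinv ω _ (orthogonalProjection H₁ x).2), sub_zero, hP2z]
    -- the connecting map φ
    haveI : FiniteDimensional ℂ (LinearMap.ker ((T - ω • (1 : H →L[ℂ] H) : H →L[ℂ] H) : H →ₗ[ℂ] H)) :=
      Module.finite_of_finrank_pos (by rw [hSker]; omega)
    set S2 := (orthogonalProjection H₁ᗮ).comp (T.comp H₁ᗮ.subtypeL) - ω • (1 : H₁ᗮ →L[ℂ] H₁ᗮ)
      with hS2def
    set S1 := (orthogonalProjection H₁).comp (T.comp H₁.subtypeL) - ω • (1 : H₁ →L[ℂ] H₁)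
      with hS1def
    let φ : (LinearMap.ker ((T - ω • (1 : H →L[ℂ] H) : H →L[ℂ] H) : H →ₗ[ℂ] H)) →ₗ[ℂ] (LinearMap.ker (S2 : H₁ᗮ →ₗ[ℂ] H₁ᗮ)) :=
      LinearMap.codRestrict _
        (((orthogonalProjection H₁ᗮ) : H →ₗ[ℂ] H₁ᗮ).domRestrict _)
        (fun x => hmem ω x x.2)
    have hφval : ∀ x : LinearMap.ker ((T - ω • (1 : H →L[ℂ] H) : H →L[ℂ] H) : H →ₗ[ℂ] H),
        (φ x : H₁ᗮ) = orthogonalProjection H₁ᗮ (x : H) := fun x => rfl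
    -- φ surjective
    have hφsurj : Function.Surjective φ := by
      rintro ⟨z, hz⟩
      have hz' : (orthogonalProjection H₁ᗮ) ((T - ω • (1 : H →L[ℂ] H)) (z : H)) = 0 := by
        rw [← ha ω]; exact hz
      have hw : (T - ω • (1 : H →L[ℂ] H)) (z : H) ∈ H₁ := by
        have := orthogonalProjection_eq_zero_iff.mp hz'
        rwa [Submodule.orthogonal_orthogonal] at this
      obtain ⟨u, hu⟩ := hS1surj ⟨-((T - ω • (1 : H →L[ℂ] H)) (z : H)), H₁.neg_mem hw⟩
      have hu' : (T - ω • (1 : H →L[ℂ] H)) ((u : H)) =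
          -((T - ω • (1 : H →L[ℂ] H)) (z : H)) := by
        rw [← hb ω u, hu]
      have hxker : (u : H) + (z : H) ∈ LinearMap.ker ((T - ω • (1 : H →L[ℂ] H) : H →L[ℂ] H) : H →ₗ[ℂ] H) := by
        rw [LinearMap.mem_ker, ContinuousLinearMap.coe_coe, map_add, hu', neg_add_cancel]
      refine ⟨⟨(u : H) + (z : H), hxker⟩, ?_⟩
      apply Subtype.ext
      rw [hφval]
      show (orthogonalProjection H₁ᗮ) ((u : H) + (z : H)) = z
      rw [map_add, hP2H1 _ u.2, hP2z z, zero_add]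
    -- ker φ ≃ ker S1
    have hmemχ : ∀ u : LinearMap.ker (S1 : H₁ →ₗ[ℂ] H₁), ((u : H₁) : H) ∈
        LinearMap.ker ((T - ω • (1 : H →L[ℂ] H) : H →L[ℂ] H) : H →ₗ[ℂ] H) := by
      intro u
      rw [LinearMap.mem_ker, ContinuousLinearMap.coe_coe, ← hb ω, show S1 (u : H₁) = 0 from u.2]
      rfl
    let aux : (LinearMap.ker (S1 : H₁ →ₗ[ℂ] H₁)) →ₗ[ℂ] (LinearMap.ker ((T - ω • (1 : H →L[ℂ] H) : H →L[ℂ] H) : H →ₗ[ℂ] H)) :=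
      LinearMap.codRestrict _ (H₁.subtype ∘ₗ (LinearMap.ker (S1 : H₁ →ₗ[ℂ] H₁)).subtype) hmemχ
    have hauxval : ∀ u : LinearMap.ker (S1 : H₁ →ₗ[ℂ] H₁), ((aux u : H)) = ((u : H₁) : H) := fun u => rfl
    let χ : (LinearMap.ker (S1 : H₁ →ₗ[ℂ] H₁)) →ₗ[ℂ] (LinearMap.ker φ) :=
      LinearMap.codRestrict _ aux (fun u => by
        rw [LinearMap.mem_ker]
        apply Subtype.ext
        rw [hφval, hauxval]
        show (orthogonalProjection H₁ᗮ) ((u : H₁) : H) = ((0 : LinearMap.ker (S2 : H₁ᗮ →ₗ[ℂ] H₁ᗮ)) : H₁ᗮ)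
        rw [hP2H1 _ (u : H₁).2]
        rfl)
    have hχbij : Function.Bijective χ := by
      constructor
      · intro a b hab
        have h3 : (((a : H₁) : H)) = ((b : H₁) : H) :=
          congrArg (fun v : LinearMap.ker φ => (((v : LinearMap.ker ((T - ω • (1 : H →L[ℂ] H) : H →L[ℂ] H) : H →ₗ[ℂ] H)) : H))) hab
        exact Subtype.ext (Subtype.ext h3)
      · rintro ⟨⟨x, hxker⟩, hvker⟩
        have hx0 : (orthogonalProjection H₁ᗮ) x = 0 := by
          have h4 : (φ (⟨x, hxker⟩ : LinearMap.ker ((T - ω • (1 : H →L[ℂ] H) : H →L[ℂ] H) : H →ₗ[ℂ] H)) : H₁ᗮ)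
              = ((0 : LinearMap.ker (S2 : H₁ᗮ →ₗ[ℂ] H₁ᗮ)) : H₁ᗮ) := congrArg _ (LinearMap.mem_ker.mp hvker)
          rwa [hφval] at h4
        have hxH1 : x ∈ H₁ := by
          have := orthogonalProjection_eq_zero_iff.mp hx0
          rwa [Submodule.orthogonal_orthogonal] at this
        have huker : (⟨x, hxH1⟩ : H₁) ∈ LinearMap.ker (S1 : H₁ →ₗ[ℂ] H₁) := by
          rw [LinearMap.mem_ker, ContinuousLinearMap.coe_coe]
          apply Subtype.ext
          rw [hb ω]
          exact LinearMap.mem_ker.mp hxker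
        exact ⟨⟨⟨x, hxH1⟩, huker⟩, Subtype.ext (Subtype.ext rfl)⟩
    have hkerφ : Module.finrank ℂ (LinearMap.ker φ) = m := by
      rw [← hS1ker]
      exact (LinearEquiv.finrank_eq (LinearEquiv.ofBijective χ hχbij)).symm
    have hrank := LinearMap.finrank_range_add_finrank_ker φ
    have hrtop : LinearMap.range φ = ⊤ := LinearMap.range_eq_top.2 hφsurj
    rw [hrtop, finrank_top, hkerφ, hSker] at hrank
    exact ⟨hS2surj, by omega⟩
  · have hdense : Dense ((⨆ ω ∈ Ω, LinearMap.ker ((T - ω • (1 : H →L[ℂ] H) : H →L[ℂ] H) : H →ₗ[ℂ] H) :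
        Submodule ℂ H) : Set H) := by
      rw [Submodule.dense_iff_topologicalClosure_eq_top]
      exact hT.2
    have hDR : DenseRange (orthogonalProjection H₁ᗮ) :=
      Function.Surjective.denseRange (fun z => ⟨(z : H), hP2z z⟩)
    have himg : Dense ((orthogonalProjection H₁ᗮ) '' ((⨆ ω ∈ Ω,
        LinearMap.ker ((T - ω • (1 : H →L[ℂ] H) : H →L[ℂ] H) : H →ₗ[ℂ] H) : Submodule ℂ H) : Set H)) :=
      hDR.dense_image (orthogonalProjection H₁ᗮ).continuous hdense
    have hmaple : Submodule.map ((orthogonalProjection H₁ᗮ) : H →ₗ[ℂ] H₁ᗮ)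
        (⨆ ω ∈ Ω, LinearMap.ker ((T - ω • (1 : H →L[ℂ] H) : H →L[ℂ] H) : H →ₗ[ℂ] H))
        ≤ ⨆ ω ∈ Ω, LinearMap.ker (((orthogonalProjection H₁ᗮ).comp (T.comp H₁ᗮ.subtypeL)
            - ω • (1 : H₁ᗮ →L[ℂ] H₁ᗮ) : H₁ᗮ →L[ℂ] H₁ᗮ) : H₁ᗮ →ₗ[ℂ] H₁ᗮ) := by
      rw [Submodule.map_le_iff_le_comap]
      refine iSup₂_le fun ω hω => ?_
      intro x hx
      exact Submodule.mem_comap.2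
        (Submodule.mem_iSup_of_mem ω (Submodule.mem_iSup_of_mem hω (hmem ω x hx)))
    rw [← Submodule.dense_iff_topologicalClosure_eq_top]
    refine Dense.mono ?_ himg
    rintro _ ⟨x, hx, rfl⟩
    exact hmaple (Submodule.mem_map_of_mem hx)
end
end

section
/- Let b : ℕ → ℝ satisfy b_n > 0 for all n, suppose the series Σ_{n=0}^∞ b_n x^n converges for every x ∈ [0,1), and suppose the sequence √(b_n/b_{n+1}) is bounded. Let T be the backward weighted shift on ℓ²(ℕ, ℂ) with T e_0 = 0 and T e_{n+1} = √(b_n/b_{n+1}) e_n. Let k ≥ 1 and a_1, …, a_k be real numbers such that the operator I + Σ_{n=1}^k a_n (T*)^n T^n is positive. Then for every x ∈ [0,1), (1 + Σ_{n=1}^k a_n x^n) · (Σ_{n=0}^∞ b_n x^n) ≥ b_0. -/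
open ContinuousLinearMap

noncomputable section

local notation "⟪" x ", " y "⟫" => @inner ℂ _ _ x y

theorem stmt_2 (b : ℕ → ℝ) (hb : ∀ n, 0 < b n)
    (hconv : ∀ x ∈ Set.Ico (0 : ℝ) 1, Summable fun n => b n * x ^ n)
    (hbdd : ∃ C : ℝ, ∀ n, Real.sqrt (b n / b (n + 1)) ≤ C)
    (T : lp (fun _ : ℕ => ℂ) 2 →L[ℂ] lp (fun _ : ℕ => ℂ) 2)
    (hT0 : T (lp.single 2 0 1) = 0)
    (hT : ∀ n : ℕ, T (lp.single 2 (n + 1) 1) =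
      (Real.sqrt (b n / b (n + 1)) : ℂ) • lp.single 2 n 1)
    (k : ℕ) (hk : 1 ≤ k) (a : ℕ → ℝ)
    (hpos : (1 + ∑ n ∈ Finset.Icc 1 k,
        ((a n : ℂ)) • ((ContinuousLinearMap.adjoint T) ^ n * T ^ n)).IsPositive) :
    ∀ x ∈ Set.Ico (0 : ℝ) 1,
      b 0 ≤ (1 + ∑ n ∈ Finset.Icc 1 k, a n * x ^ n) * ∑' n, b n * x ^ n := by
  intro x hx
  obtain ⟨hx0, hx1⟩ := hx
  have hbx : ∀ j, 0 ≤ b j * x ^ j := fun j => mul_nonneg (hb j).le (pow_nonneg hx0 j)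
  have hsum : Summable fun n => b n * x ^ n := hconv x ⟨hx0, hx1⟩
  set f : ℝ := ∑' n, b n * x ^ n with hf
  set s : ℝ := Real.sqrt x with hs
  have hs0 : 0 ≤ s := Real.sqrt_nonneg x
  have hs2 : s ^ 2 = x := Real.sq_sqrt hx0
  -- the vector w
  set wf : ℕ → ℂ := fun j => ((Real.sqrt (b j * x ^ j) : ℝ) : ℂ) with hwf
  have hmem : Memℓp wf 2 := by
    apply memℓp_gen
    have : (fun i => ‖wf i‖ ^ (2 : ENNReal).toReal) = fun i => b i * x ^ i := by
      funext i
      rw [show ((2 : ENNReal)).toReal = ((2 : ℕ) : ℝ) by norm_num, Real.rpow_natCast]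
      simp only [hwf, Complex.norm_real, Real.norm_eq_abs,
        abs_of_nonneg (Real.sqrt_nonneg _)]
      exact Real.sq_sqrt (hbx i)
    rw [this]; exact hsum
  set w : lp (fun _ : ℕ => ℂ) 2 := ⟨wf, hmem⟩ with hw
  have hwcoe : ∀ j, w j = wf j := fun j => rfl
  have hsingle : ∀ (i : ℕ) (c : ℂ), (lp.single 2 i c : lp (fun _ : ℕ => ℂ) 2) = c • lp.single 2 i 1 := by
    intro i c
    rw [← lp.single_smul, smul_eq_mul, mul_one]
  -- key step : T w = s • w
  have hstep : ∀ j : ℕ, wf (j + 1) * (Real.sqrt (b j / b (j + 1)) : ℂ) = (s : ℂ) * wf j := by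
    intro j
    simp only [hwf, hs]
    rw [← Complex.ofReal_mul, ← Complex.ofReal_mul]
    congr 1
    rw [← Real.sqrt_mul (hbx (j + 1)), ← Real.sqrt_mul hx0]
    congr 1
    field_simp [(hb (j + 1)).ne']
    ring
  have hhw : HasSum (fun j => lp.single 2 j (w j)) w := lp.hasSum_single (by norm_num) w
  have h1 : HasSum (fun j => T (lp.single 2 j (w j))) (T w) := hhw.mapL T
  have hg1 : ∀ j : ℕ, T (lp.single 2 (j + 1) (w (j + 1))) = (s : ℂ) • lp.single 2 j (w j) := by
    intro j
    rw [hsingle (j + 1) (w (j + 1)), map_smul, hT j, smul_smul, hwcoe, hstep, ← smul_smul,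
      ← hsingle j (w j)]
  have hg0 : T (lp.single 2 0 (w 0)) = 0 := by
    rw [hsingle, map_smul, hT0, smul_zero]
  have hgsum : HasSum (fun j => T (lp.single 2 j (w j))) ((s : ℂ) • w) := by
    have h2 : HasSum (fun j => T (lp.single 2 (j + 1) (w (j + 1)))) ((s : ℂ) • w) := by
      simp only [hg1]
      exact hhw.const_smul _
    have h3 := (hasSum_nat_add_iff (f := fun j => T (lp.single 2 j (w j))) 1).mp h2
    simpa [hg0] using h3
  have hTw : T w = (s : ℂ) • w := h1.unique hgsum
  -- the vector u
  set u : lp (fun _ : ℕ => ℂ) 2 := w - (Real.sqrt (b 0) : ℂ) • lp.single 2 0 1 with hu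
  have hTu : T u = (s : ℂ) • w := by
    rw [hu, map_sub, map_smul, hT0, smul_zero, sub_zero, hTw]
  have hTn : ∀ n : ℕ, (T ^ (n + 1)) u = ((s : ℂ) ^ (n + 1)) • w := by
    intro n
    induction n with
    | zero => simpa using hTu
    | succ m ih =>
      rw [pow_succ' T (m + 1), ContinuousLinearMap.mul_apply, ih, map_smul, hTw, smul_smul, ← pow_succ]
  -- inner products
  have hww : ⟪w, w⟫ = (f : ℂ) := by
    rw [lp.inner_eq_tsum]
    have : (fun i => ⟪w i, w i⟫) = fun i => ((b i * x ^ i : ℝ) : ℂ) := by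
      funext i
      rw [hwcoe]
      simp only [hwf, RCLike.inner_apply, Complex.conj_ofReal, ← Complex.ofReal_mul]
      rw [Real.mul_self_sqrt (hbx i)]
    rw [this, hf, Complex.ofReal_tsum]
  have hw0 : w 0 = (Real.sqrt (b 0) : ℂ) := by
    rw [hwcoe]; simp [hwf]
  have hb0 : (Real.sqrt (b 0) : ℂ) * (Real.sqrt (b 0) : ℂ) = ((b 0 : ℝ) : ℂ) := by
    rw [← Complex.ofReal_mul, Real.mul_self_sqrt (hb 0).le]
  have huu : ⟪u, u⟫ = ((f - b 0 : ℝ) : ℂ) := by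
    rw [hu, inner_sub_left, inner_sub_right, inner_sub_right, inner_smul_left,
      inner_smul_right, inner_smul_left, inner_smul_right, lp.inner_single_right,
      lp.inner_single_left, lp.inner_single_left, hww]
    simp only [RCLike.inner_apply, Complex.conj_ofReal, hw0, lp.single_apply_self,
      map_one, mul_one, one_mul, hb0]
    push_cast
    ring
  -- positivity applied to u
  have hkey := hpos.2 u
  rw [ContinuousLinearMap.reApplyInnerSelf_apply] at hkey
  have hadj : ∀ n : ℕ, (ContinuousLinearMap.adjoint T) ^ n = ContinuousLinearMap.adjoint (T ^ n) := by
    intro n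
    rw [← star_eq_adjoint, ← star_eq_adjoint, ← star_pow]
  have hinner : ⟪(1 + ∑ n ∈ Finset.Icc 1 k,
      ((a n : ℂ)) • ((ContinuousLinearMap.adjoint T) ^ n * T ^ n)) u, u⟫
      = ((f - b 0 + ∑ n ∈ Finset.Icc 1 k, a n * (x ^ n * f) : ℝ) : ℂ) := by
    rw [ContinuousLinearMap.add_apply, ContinuousLinearMap.one_apply,
      ContinuousLinearMap.sum_apply, inner_add_left, sum_inner, huu]
    have hterm : ∀ n ∈ Finset.Icc 1 k,
        ⟪(((a n : ℂ)) • ((ContinuousLinearMap.adjoint T) ^ n * T ^ n)) u, u⟫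
        = ((a n * (x ^ n * f) : ℝ) : ℂ) := by
      intro n hn
      obtain ⟨m, rfl⟩ : ∃ m, n = m + 1 := by
        obtain ⟨hn1, -⟩ := Finset.mem_Icc.mp hn
        exact ⟨n - 1, by omega⟩
      rw [ContinuousLinearMap.smul_apply, inner_smul_left, ContinuousLinearMap.mul_apply, hadj,
        adjoint_inner_left, hTn, inner_smul_left, inner_smul_right, hww]
      have hsx : ((s : ℂ)) ^ 2 = (x : ℂ) := by rw [← Complex.ofReal_pow, hs2]
      rw [Complex.conj_ofReal]
      rw [← Complex.ofReal_pow, Complex.conj_ofReal]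
      push_cast
      rw [← hsx]
      ring
    rw [Finset.sum_congr rfl hterm]
    push_cast
    ring
  rw [hinner] at hkey
  simp only [RCLike.re_to_complex, Complex.ofReal_re] at hkey
  have hfin : (1 + ∑ n ∈ Finset.Icc 1 k, a n * x ^ n) * f
      = f + ∑ n ∈ Finset.Icc 1 k, a n * (x ^ n * f) := by
    rw [add_mul, one_mul, Finset.sum_mul]
    congr 1
    exact Finset.sum_congr rfl fun n _ => by ring
  rw [hfin]
  linarith
end
end

section
/- Let T be a bounded operator on a complex separable Hilbert space H belonging to B_1(𝔻), where 𝔻 is the open unit disk in ℂ. Then the adjoint T* is an isometry if and only if T is unitarily equivalent to the backward shift S on ℓ²(ℕ, ℂ) defined by S e_0 = 0 and S e_{n+1} = e_n, i.e. there exists a unitary operator U : H → ℓ²(ℕ, ℂ) with U T U* = S. -/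
open ContinuousLinearMap Submodule

open scoped InnerProductSpace

noncomputable section

private lemma adjointS_norm (S : lp (fun _ : ℕ => ℂ) 2 →L[ℂ] lp (fun _ : ℕ => ℂ) 2)
    (hS0 : S (lp.single 2 0 1) = 0)
    (hSn : ∀ n : ℕ, S (lp.single 2 (n + 1) 1) = lp.single 2 n 1)
    (f : lp (fun _ : ℕ => ℂ) 2) : ‖ContinuousLinearMap.adjoint S f‖ = ‖f‖ := by
  classical
  set g := ContinuousLinearMap.adjoint S f with hg
  have hcoord : ∀ (h : lp (fun _ : ℕ => ℂ) 2) (n : ℕ),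
      ⟪lp.single 2 n (1 : ℂ), h⟫_ℂ = h n := by
    intro h n
    rw [lp.inner_single_left]
    simp [RCLike.inner_apply]
  have hg0 : g 0 = 0 := by
    rw [← hcoord g 0, hg, ContinuousLinearMap.adjoint_inner_right, hS0, inner_zero_left]
  have hgs : ∀ n : ℕ, g (n + 1) = f n := by
    intro n
    rw [← hcoord g (n + 1), hg, ContinuousLinearMap.adjoint_inner_right, hSn, hcoord]
  have hii : ⟪g, g⟫_ℂ = ⟪f, f⟫_ℂ := by
    rw [lp.inner_eq_tsum, lp.inner_eq_tsum]
    have hs : Summable fun i => ⟪g i, g i⟫_ℂ := lp.summable_inner g g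
    rw [hs.tsum_eq_zero_add]
    simp only [hg0, hgs, inner_zero_left, zero_add]
  rw [norm_eq_sqrt_re_inner (𝕜 := ℂ), norm_eq_sqrt_re_inner (𝕜 := ℂ), hii]

theorem stmt_7 {H : Type*} [NormedAddCommGroup H] [InnerProductSpace ℂ H]
    [CompleteSpace H] [TopologicalSpace.SeparableSpace H]
    (T : H →L[ℂ] H) (hT : CowenDouglas T (Metric.ball (0 : ℂ) 1) 1) :
    Isometry (ContinuousLinearMap.adjoint T) ↔
      ∃ S : lp (fun _ : ℕ => ℂ) 2 →L[ℂ] lp (fun _ : ℕ => ℂ) 2,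
        S (lp.single 2 0 1) = 0 ∧
        (∀ n : ℕ, S (lp.single 2 (n + 1) 1) = lp.single 2 n 1) ∧
        ∃ U : H ≃ₗᵢ[ℂ] lp (fun _ : ℕ => ℂ) 2, ∀ x : H, U (T x) = S (U x) := by
  classical
  constructor
  · intro hiso
    set A := ContinuousLinearMap.adjoint T with hA
    have hnormA : ∀ x : H, ‖A x‖ = ‖x‖ := by
      intro x
      have := hiso.dist_eq x 0
      simpa [dist_eq_norm] using this
    have hinnA : ∀ x y : H, ⟪A x, A y⟫_ℂ = ⟪x, y⟫_ℂ := fun x y =>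
      LinearIsometry.inner_map_map ⟨(A : H →ₗ[ℂ] H), hnormA⟩ x y
    have hTA : ∀ x : H, T (A x) = x := by
      intro x
      apply ext_inner_right ℂ
      intro y
      calc ⟪T (A x), y⟫_ℂ = ⟪A x, A y⟫_ℂ :=
            (ContinuousLinearMap.adjoint_inner_right T (A x) y).symm
        _ = ⟪x, y⟫_ℂ := hinnA x y
    -- a unit vector in the kernel of T
    have h0mem : (0 : ℂ) ∈ Metric.ball (0 : ℂ) 1 := by simp
    have hT0 : T - (0 : ℂ) • (1 : H →L[ℂ] H) = T := by simp
    have hker1 : Module.finrank ℂ (LinearMap.ker (T : H →ₗ[ℂ] H)) = 1 := by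
      have := (hT.1 0 h0mem).2
      rwa [hT0] at this
    have hkerne : LinearMap.ker (T : H →ₗ[ℂ] H) ≠ ⊥ := by
      intro h
      rw [h] at hker1
      simp at hker1
    obtain ⟨v, hv, hvne⟩ := (Submodule.ne_bot_iff _).mp hkerne
    set e0 : H := ((‖v‖ : ℂ))⁻¹ • v with he0def
    have hvnorm : ‖v‖ ≠ 0 := norm_ne_zero_iff.mpr hvne
    have he0norm : ‖e0‖ = 1 := by
      rw [he0def, norm_smul, norm_inv, Complex.norm_real, Real.norm_eq_abs,
        abs_of_nonneg (norm_nonneg v), inv_mul_cancel₀ hvnorm]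
    have hTe0 : T e0 = 0 := by
      rw [he0def, map_smul, (show T v = 0 from LinearMap.mem_ker.mp hv), smul_zero]
    -- the orthonormal sequence
    set e : ℕ → H := fun n => (fun x => A x)^[n] e0 with hedef
    have he_zero : e 0 = e0 := rfl
    have he_succ : ∀ n, e (n + 1) = A (e n) := by
      intro n
      simp only [hedef]
      rw [Function.iterate_succ_apply']
    have hTe : ∀ n, T (e (n + 1)) = e n := by
      intro n; rw [he_succ]; exact hTA _
    have h0n : ∀ n, ⟪e 0, e (n + 1)⟫_ℂ = 0 := by
      intro n
      rw [he_succ, hA, ContinuousLinearMap.adjoint_inner_right, he_zero, hTe0,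
        inner_zero_left]
    have hkey : ∀ m n : ℕ, ⟪e m, e n⟫_ℂ = if m = n then 1 else 0 := by
      intro m
      induction m with
      | zero =>
        intro n
        cases n with
        | zero =>
          rw [inner_self_eq_norm_sq_to_K, he_zero, he0norm]
          norm_num
        | succ k =>
          rw [h0n k]
          simp
      | succ m ih =>
        intro n
        cases n with
        | zero =>
          rw [← inner_conj_symm, h0n m]
          simp
        | succ k =>
          rw [he_succ, he_succ, hinnA, ih k]
          simp [Nat.succ_inj]
    have horth : Orthonormal ℂ e := by
      rw [orthonormal_iff_ite]
      exact hkey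
    have henorm : ∀ n, ‖e n‖ = 1 := horth.1
    -- kernels are contained in the closed span of the `e n`
    have hker_le : ∀ ω ∈ Metric.ball (0 : ℂ) 1,
        LinearMap.ker ((T - ω • (1 : H →L[ℂ] H) : H →L[ℂ] H) : H →ₗ[ℂ] H) ≤
          (span ℂ (Set.range e)).topologicalClosure := by
      intro ω hω
      have hωlt : ‖ω‖ < 1 := by simpa [Metric.mem_ball] using hω
      have hsum : Summable (fun n : ℕ => ω ^ n • e n) := by
        apply Summable.of_norm
        have hterm : ∀ n : ℕ, ‖ω ^ n • e n‖ = ‖ω‖ ^ n := by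
          intro n
          rw [norm_smul, norm_pow, henorm n, mul_one]
        simpa [hterm] using summable_geometric_of_lt_one (norm_nonneg ω) hωlt
      set xω : H := ∑' n : ℕ, ω ^ n • e n with hxdef
      have hx : HasSum (fun n : ℕ => ω ^ n • e n) xω := hsum.hasSum
      have hshift : HasSum (fun n : ℕ => ω ^ (n + 1) • e n) (ω • xω) := by
        have := hx.const_smul ω
        simpa [smul_smul, pow_succ, mul_comm] using this
      have hTx : HasSum (fun n : ℕ => ω ^ n • T (e n)) (T xω) := by
        have := (T : H →L[ℂ] H).hasSum hx
        simpa [map_smul] using this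
      have hTx2 : HasSum (fun n : ℕ => ω ^ n • T (e n)) (ω • xω) := by
        have h1 : HasSum (fun n : ℕ => ω ^ (n + 1) • T (e (n + 1))) (ω • xω) := by
          simpa [hTe] using hshift
        have h2 := (hasSum_nat_add_iff (f := fun n : ℕ => ω ^ n • T (e n)) 1).mp
          (by simpa using h1)
        simpa [he_zero, hTe0] using h2
      have hTxeq : T xω = ω • xω := hTx.unique hTx2
      have hxker : xω ∈ LinearMap.ker ((T - ω • (1 : H →L[ℂ] H) : H →L[ℂ] H) : H →ₗ[ℂ] H) := by
        rw [LinearMap.mem_ker]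
        simp [ContinuousLinearMap.sub_apply, ContinuousLinearMap.smul_apply,
          ContinuousLinearMap.one_apply, hTxeq]
      have hxinner : ⟪e 0, xω⟫_ℂ = 1 := by
        have hin : HasSum (fun n : ℕ => ω ^ n * ⟪e 0, e n⟫_ℂ) ⟪e 0, xω⟫_ℂ := by
          have := (innerSL ℂ (e 0)).hasSum hx
          simpa using this
        have hval : (fun n : ℕ => ω ^ n * ⟪e 0, e n⟫_ℂ) =
            fun n : ℕ => if n = 0 then (1 : ℂ) else 0 := by
          funext n
          rw [hkey 0 n]
          rcases n with _ | k
          · simp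
          · simp
        rw [hval] at hin
        exact hin.unique (hasSum_ite_eq 0 1)
      have hxne : xω ≠ 0 := by
        intro h
        rw [h, inner_zero_right] at hxinner
        exact zero_ne_one hxinner
      have hfin : FiniteDimensional ℂ (LinearMap.ker ((T - ω • (1 : H →L[ℂ] H) : H →L[ℂ] H) : H →ₗ[ℂ] H)) :=
        FiniteDimensional.of_finrank_pos (by rw [(hT.1 ω hω).2]; norm_num)
      have hker_eq : LinearMap.ker ((T - ω • (1 : H →L[ℂ] H) : H →L[ℂ] H) : H →ₗ[ℂ] H) = span ℂ {xω} := by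
        refine (Submodule.eq_of_le_of_finrank_eq ?_ ?_).symm
        · rw [span_le, Set.singleton_subset_iff]
          exact hxker
        · rw [finrank_span_singleton hxne, (hT.1 ω hω).2]
      rw [hker_eq, span_le, Set.singleton_subset_iff]
      have hxmem : xω ∈ closure ((span ℂ (Set.range e) : Submodule ℂ H) : Set H) := by
        refine mem_closure_of_tendsto hx (Filter.Eventually.of_forall fun s => ?_)
        exact sum_mem fun i _ => Submodule.smul_mem _ _ (subset_span ⟨i, rfl⟩)
      exact hxmem
    have hsp : ⊤ ≤ (span ℂ (Set.range e)).topologicalClosure := by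
      rw [← hT.2]
      have h1 : (⨆ ω ∈ Metric.ball (0 : ℂ) 1,
          LinearMap.ker ((T - ω • (1 : H →L[ℂ] H) : H →L[ℂ] H) : H →ₗ[ℂ] H)) ≤
            (span ℂ (Set.range e)).topologicalClosure := iSup₂_le hker_le
      calc (⨆ ω ∈ Metric.ball (0 : ℂ) 1,
          LinearMap.ker ((T - ω • (1 : H →L[ℂ] H) : H →L[ℂ] H) : H →ₗ[ℂ] H)).topologicalClosure
          ≤ ((span ℂ (Set.range e)).topologicalClosure).topologicalClosure :=
            Submodule.topologicalClosure_mono h1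
        _ = (span ℂ (Set.range e)).topologicalClosure :=
            (span ℂ (Set.range e)).isClosed_topologicalClosure.submodule_topologicalClosure_eq
    set b : HilbertBasis ℕ ℂ H := HilbertBasis.mk horth hsp with hbdef
    have hb : ∀ n, b n = e n := by
      intro n
      rw [hbdef, HilbertBasis.coe_mk]
    set U : H ≃ₗᵢ[ℂ] lp (fun _ : ℕ => ℂ) 2 := b.repr with hUdef
    have hUe : ∀ n : ℕ, U (e n) = lp.single 2 n 1 := by
      intro n
      rw [hUdef, ← hb n]
      exact b.repr_self n
    refine ⟨(U.toLinearIsometry.toContinuousLinearMap).comp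
      (T.comp U.symm.toLinearIsometry.toContinuousLinearMap), ?_, ?_, U, ?_⟩
    · have h1 : U.symm (lp.single 2 0 1) = e 0 := by
        rw [← hUe 0, U.symm_apply_apply]
      simp only [ContinuousLinearMap.comp_apply, LinearIsometry.coe_toContinuousLinearMap,
        LinearIsometryEquiv.coe_toLinearIsometry]
      rw [h1, he_zero, hTe0, map_zero]
    · intro n
      have h1 : U.symm (lp.single 2 (n + 1) 1) = e (n + 1) := by
        rw [← hUe (n + 1), U.symm_apply_apply]
      simp only [ContinuousLinearMap.comp_apply, LinearIsometry.coe_toContinuousLinearMap,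
        LinearIsometryEquiv.coe_toLinearIsometry]
      rw [h1, hTe n, hUe n]
    · intro x
      simp only [ContinuousLinearMap.comp_apply, LinearIsometry.coe_toContinuousLinearMap,
        LinearIsometryEquiv.coe_toLinearIsometry]
      rw [U.symm_apply_apply]
  · rintro ⟨S, hS0, hSn, U, hU⟩
    have key : ∀ x : H, ContinuousLinearMap.adjoint T x =
        U.symm (ContinuousLinearMap.adjoint S (U x)) := by
      intro x
      apply ext_inner_right ℂ
      intro y
      rw [ContinuousLinearMap.adjoint_inner_left]
      have h1 : ⟪U.symm (ContinuousLinearMap.adjoint S (U x)), y⟫_ℂ =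
          ⟪ContinuousLinearMap.adjoint S (U x), U y⟫_ℂ := by
        rw [← U.inner_map_map (U.symm _) y, U.apply_symm_apply]
      rw [h1, ContinuousLinearMap.adjoint_inner_left, ← hU, U.inner_map_map]
    have hnorm : ∀ x : H, ‖ContinuousLinearMap.adjoint T x‖ = ‖x‖ := by
      intro x
      rw [key, U.symm.norm_map, adjointS_norm S hS0 hSn, U.norm_map]
    exact AddMonoidHomClass.isometry_of_norm _ hnorm
end
end

section
/- Let T be a bounded operator on a complex separable Hilbert space H with ‖T‖ ≤ 1, and let M be a closed subspace of H invariant under T such that T|_M belongs to B_1(𝔻) and (T|_M)* is an isometry. Then P_M T|_{M⊥} = 0; that is, M⊥ is also invariant under T, so M reduces T. -/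
open ContinuousLinearMap Submodule

noncomputable section

theorem stmt_8 {H : Type*} [NormedAddCommGroup H] [InnerProductSpace ℂ H]
    [CompleteSpace H] [TopologicalSpace.SeparableSpace H]
    (T : H →L[ℂ] H) (hT : ‖T‖ ≤ 1)
    (M : Submodule ℂ H) [CompleteSpace M]
    (hinv : ∀ x ∈ M, T x ∈ M)
    (hB1 : CowenDouglas ((orthogonalProjection M).comp (T.comp M.subtypeL))
      (Metric.ball (0 : ℂ) 1) 1)
    (hiso : Isometry
      (ContinuousLinearMap.adjoint ((orthogonalProjection M).comp (T.comp M.subtypeL)))) :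
    (orthogonalProjection M).comp (T.comp Mᗮ.subtypeL) = 0 ∧
    ∀ x ∈ Mᗮ, T x ∈ Mᗮ := by
  -- The adjoint of A := P_M T ι_M is P_M T* ι_M
  have hadj : ContinuousLinearMap.adjoint ((orthogonalProjection M).comp (T.comp M.subtypeL))
      = (orthogonalProjection M).comp ((ContinuousLinearMap.adjoint T).comp M.subtypeL) := by
    rw [adjoint_comp, adjoint_comp, M.adjoint_subtypeL, M.adjoint_orthogonalProjection]
    rfl
  -- For every m ∈ M, T* m ∈ M
  have key : ∀ m : M, ContinuousLinearMap.adjoint T (m : H) ∈ M := by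
    intro m
    set x := ContinuousLinearMap.adjoint T (m : H) with hx
    have hnormP : ‖orthogonalProjection M x‖ = ‖m‖ := by
      have := (AddMonoidHomClass.isometry_iff_norm _).mp hiso m
      rwa [hadj] at this
    have hle : ‖x‖ ≤ ‖m‖ := by
      calc ‖x‖ ≤ ‖ContinuousLinearMap.adjoint T‖ * ‖(m : H)‖ := le_opNorm _ _
        _ ≤ 1 * ‖(m : H)‖ := by
            gcongr
            rw [LinearIsometryEquiv.norm_map ContinuousLinearMap.adjoint T]
            exact hT
        _ = ‖m‖ := by rw [one_mul]; rfl
    have hpyth := norm_sq_eq_add_norm_sq_projection x M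
    have hzero : ‖orthogonalProjection Mᗮ x‖ = 0 := by
      nlinarith [norm_nonneg (orthogonalProjection Mᗮ x), norm_nonneg x, norm_nonneg m]
    have hz : (orthogonalProjection Mᗮ x : H) = 0 := by
      have := norm_eq_zero.mp hzero
      rw [this]; rfl
    have : (orthogonalProjection M x : H) + (orthogonalProjection Mᗮ x : H) = x :=
      starProjection_add_starProjection_orthogonal (K := M) x
    rw [hz, add_zero] at this
    rw [← this]
    exact (orthogonalProjection M x).2
  -- Hence Mᗮ is T-invariant
  have hinv' : ∀ x ∈ Mᗮ, T x ∈ Mᗮ := by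
    intro x hx
    rw [Submodule.mem_orthogonal]
    intro u hu
    have : inner ℂ (ContinuousLinearMap.adjoint T u) x = (0 : ℂ) := hx _ (key ⟨u, hu⟩)
    rwa [adjoint_inner_left] at this
  refine ⟨?_, hinv'⟩
  ext x
  simp only [comp_apply, Submodule.subtypeL_apply, zero_apply]
  rw [Submodule.orthogonalProjectionOnto_eq_zero_iff.mpr (hinv' x x.2)]
end
end

section
/- Let H1, H2 be complex Hilbert spaces and let T = [[T1, T12],[0, T2]] be the block operator on H1 ⊕ H2, where T1, T2, T12 are bounded, ‖T1‖ ≤ 1, and I − T1*T1 is invertible. Then ‖T‖ ≤ 1 if and only if I − T2*T2 − T12*(I + T1 (I − T1*T1)^{-1} T1*) T12 is a positive operator, i.e. I − T2*T2 ≥ T12*[I + T1 (I − T1*T1)^{-1} T1*] T12. -/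
open ContinuousLinearMap
open scoped InnerProductSpace
open RCLike (re)

noncomputable section

theorem stmt_9 {H₁ H₂ : Type*}
    [NormedAddCommGroup H₁] [InnerProductSpace ℂ H₁] [CompleteSpace H₁]
    [NormedAddCommGroup H₂] [InnerProductSpace ℂ H₂] [CompleteSpace H₂]
    (T₁ : H₁ →L[ℂ] H₁) (T₂ : H₂ →L[ℂ] H₂) (T₁₂ : H₂ →L[ℂ] H₁)
    (hT₁ : ‖T₁‖ ≤ 1)
    (hinv : IsUnit (1 - ContinuousLinearMap.adjoint T₁ * T₁))
    (T : WithLp 2 (H₁ × H₂) →L[ℂ] WithLp 2 (H₁ × H₂))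
    (hT : ∀ (x : H₁) (y : H₂),
      T ((WithLp.equiv 2 (H₁ × H₂)).symm (x, y)) =
        (WithLp.equiv 2 (H₁ × H₂)).symm (T₁ x + T₁₂ y, T₂ y)) :
    ‖T‖ ≤ 1 ↔
      (1 - ContinuousLinearMap.adjoint T₂ * T₂ -
        (ContinuousLinearMap.adjoint T₁₂).comp
          (((1 : H₁ →L[ℂ] H₁) + T₁ * Ring.inverse (1 - ContinuousLinearMap.adjoint T₁ * T₁) *
            ContinuousLinearMap.adjoint T₁).comp T₁₂)).IsPositive := by
  set D : H₁ →L[ℂ] H₁ := 1 - ContinuousLinearMap.adjoint T₁ * T₁ with hDdef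
  set E : H₁ →L[ℂ] H₁ := Ring.inverse D with hEdef
  set S : H₂ →L[ℂ] H₂ := 1 - ContinuousLinearMap.adjoint T₂ * T₂ -
      (ContinuousLinearMap.adjoint T₁₂).comp
        (((1 : H₁ →L[ℂ] H₁) + T₁ * E * ContinuousLinearMap.adjoint T₁).comp T₁₂) with hSdef
  have hDE : D * E = 1 := Ring.mul_inverse_cancel D hinv
  have hED : E * D = 1 := Ring.inverse_mul_cancel D hinv
  have hDsa : IsSelfAdjoint D := by
    have h1 : IsSelfAdjoint (ContinuousLinearMap.adjoint T₁ * T₁) := by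
      simpa [star_eq_adjoint] using IsSelfAdjoint.star_mul_self T₁
    exact (IsSelfAdjoint.one _).sub h1
  have hEsa : IsSelfAdjoint E := by
    have h1 : star E * D = 1 := by
      calc star E * D = star (D * E) := by rw [star_mul, hDsa.star_eq]
      _ = 1 := by rw [hDE, star_one]
    calc star E = star E * (D * E) := by rw [hDE, mul_one]
    _ = (star E * D) * E := by rw [mul_assoc]
    _ = E := by rw [h1, one_mul]
  have hSsa : IsSelfAdjoint S := by
    have hM : IsSelfAdjoint ((1 : H₁ →L[ℂ] H₁) + T₁ * E * ContinuousLinearMap.adjoint T₁) := by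
      have : star (T₁ * E * ContinuousLinearMap.adjoint T₁)
          = T₁ * E * ContinuousLinearMap.adjoint T₁ := by
        simp only [star_mul, hEsa.star_eq, star_eq_adjoint, adjoint_adjoint, mul_assoc]
      exact (IsSelfAdjoint.one _).add this
    have h2 : IsSelfAdjoint (ContinuousLinearMap.adjoint T₂ * T₂) := by
      simpa [star_eq_adjoint] using IsSelfAdjoint.star_mul_self T₂
    have h3 : IsSelfAdjoint ((ContinuousLinearMap.adjoint T₁₂).comp
        (((1 : H₁ →L[ℂ] H₁) + T₁ * E * ContinuousLinearMap.adjoint T₁).comp T₁₂)) := by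
      rw [isSelfAdjoint_iff', adjoint_comp, adjoint_comp, adjoint_adjoint, hM.adjoint_eq]
      ext x
      rfl
    exact ((IsSelfAdjoint.one _).sub h2).sub h3
  -- the quadratic form of D
  have hg : ∀ x : H₁, re (⟪D x, x⟫_ℂ) = ‖x‖ ^ 2 - ‖T₁ x‖ ^ 2 := by
    intro x
    have hc : (⟪D x, x⟫_ℂ) = ⟪x, x⟫_ℂ - ⟪T₁ x, T₁ x⟫_ℂ := by
      simp [hDdef, ContinuousLinearMap.sub_apply, ContinuousLinearMap.mul_apply,
        inner_sub_left, adjoint_inner_left]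
    rw [hc, map_sub, inner_self_eq_norm_sq, inner_self_eq_norm_sq]
  have hDpos : ∀ x : H₁, 0 ≤ re (⟪D x, x⟫_ℂ) := by
    intro x
    rw [hg]
    have h1 : ‖T₁ x‖ ≤ ‖x‖ := by
      calc ‖T₁ x‖ ≤ ‖T₁‖ * ‖x‖ := T₁.le_opNorm x
      _ ≤ 1 * ‖x‖ := by gcongr
      _ = ‖x‖ := one_mul _
    nlinarith [norm_nonneg (T₁ x), norm_nonneg x]
  -- x₀
  set x₀ : H₂ → H₁ := fun y => E (ContinuousLinearMap.adjoint T₁ (T₁₂ y)) with hx₀def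
  have hDx₀ : ∀ y, D (x₀ y) = ContinuousLinearMap.adjoint T₁ (T₁₂ y) := by
    intro y
    have := congrArg (fun A : H₁ →L[ℂ] H₁ => A (ContinuousLinearMap.adjoint T₁ (T₁₂ y))) hDE
    simpa [ContinuousLinearMap.mul_apply] using this
  -- value of the form of S
  have hSval : ∀ y : H₂, re (⟪S y, y⟫_ℂ)
      = ‖y‖ ^ 2 - ‖T₂ y‖ ^ 2 - ‖T₁₂ y‖ ^ 2 - re (⟪D (x₀ y), x₀ y⟫_ℂ) := by
    intro y
    have h1 : re (⟪T₁ (x₀ y), T₁₂ y⟫_ℂ) = re (⟪D (x₀ y), x₀ y⟫_ℂ) := by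
      rw [← adjoint_inner_right, ← hDx₀ y, inner_re_symm]
    have hc : (⟪S y, y⟫_ℂ) = ⟪y, y⟫_ℂ - ⟪T₂ y, T₂ y⟫_ℂ -
        (⟪T₁₂ y, T₁₂ y⟫_ℂ + ⟪T₁ (x₀ y), T₁₂ y⟫_ℂ) := by
      simp only [hSdef, ContinuousLinearMap.sub_apply, ContinuousLinearMap.coe_comp',
        Function.comp_apply, ContinuousLinearMap.add_apply, ContinuousLinearMap.mul_apply,
        ContinuousLinearMap.one_apply, inner_sub_left, inner_add_left, adjoint_inner_left]
      rfl
    rw [hc, map_sub, map_sub, map_add, inner_self_eq_norm_sq, inner_self_eq_norm_sq,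
      inner_self_eq_norm_sq, h1]
    ring
  -- relating re inner with D
  have hre1 : ∀ (x : H₁) (y : H₂), re (⟪T₁ x, T₁₂ y⟫_ℂ) = re (⟪x, D (x₀ y)⟫_ℂ) := by
    intro x y
    rw [hDx₀, adjoint_inner_right]
  have hsq : ∀ (x z : H₁), re (⟪D (x - z), x - z⟫_ℂ)
      = re (⟪D x, x⟫_ℂ) - 2 * re (⟪x, D z⟫_ℂ) + re (⟪D z, z⟫_ℂ) := by
    intro x z
    have h1 : (⟪D x, z⟫_ℂ) = ⟪x, D z⟫_ℂ := by
      rw [← adjoint_inner_left, hDsa.adjoint_eq]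
    have h2 : re (⟪D z, x⟫_ℂ) = re (⟪x, D z⟫_ℂ) := inner_re_symm _ _
    have hc : (⟪D (x - z), x - z⟫_ℂ) = ⟪D x, x⟫_ℂ - ⟪x, D z⟫_ℂ - ⟪D z, x⟫_ℂ + ⟪D z, z⟫_ℂ := by
      simp only [map_sub, inner_sub_left, inner_sub_right, h1]
      ring
    rw [hc, map_add, map_sub, map_sub, h2]
    ring
  -- norm condition
  have hnorm : ‖T‖ ≤ 1 ↔ ∀ (x : H₁) (y : H₂),
      ‖T₁ x + T₁₂ y‖ ^ 2 + ‖T₂ y‖ ^ 2 ≤ ‖x‖ ^ 2 + ‖y‖ ^ 2 := by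
    rw [ContinuousLinearMap.opNorm_le_iff zero_le_one]
    constructor
    · intro h x y
      have h1 := h ((WithLp.equiv 2 (H₁ × H₂)).symm (x, y))
      rw [hT, one_mul] at h1
      have h2 := pow_le_pow_left₀ (norm_nonneg _) h1 2
      rw [WithLp.prod_norm_sq_eq_of_L2, WithLp.prod_norm_sq_eq_of_L2,
        WithLp.equiv_symm_apply, WithLp.toLp_fst, WithLp.toLp_snd, WithLp.toLp_fst,
        WithLp.toLp_snd] at h2
      exact h2
    · intro h z
      rw [one_mul]
      have hz : z = (WithLp.equiv 2 (H₁ × H₂)).symm (z.fst, z.snd) := rfl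
      have h1 : ‖T z‖ ^ 2 ≤ ‖z‖ ^ 2 := by
        rw [hz, hT, WithLp.prod_norm_sq_eq_of_L2, WithLp.prod_norm_sq_eq_of_L2,
          WithLp.equiv_symm_apply, WithLp.toLp_fst, WithLp.toLp_snd, WithLp.toLp_fst,
          WithLp.toLp_snd]
        exact h z.fst z.snd
      exact le_of_pow_le_pow_left₀ two_ne_zero (norm_nonneg z) h1
  rw [hnorm]
  constructor
  · intro h
    refine ⟨hSsa.isSymmetric, fun y => ?_⟩
    rw [ContinuousLinearMap.reApplyInnerSelf_apply, hSval]
    have h1 := h (x₀ y) y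
    rw [norm_add_sq (𝕜 := ℂ)] at h1
    have h2 : ‖T₁ (x₀ y)‖ ^ 2 = ‖x₀ y‖ ^ 2 - re (⟪D (x₀ y), x₀ y⟫_ℂ) := by
      have := hg (x₀ y); linarith
    have h3 : re (⟪T₁ (x₀ y), T₁₂ y⟫_ℂ) = re (⟪D (x₀ y), x₀ y⟫_ℂ) := by
      rw [hre1, inner_re_symm]
    rw [h2, h3] at h1
    linarith
  · rintro ⟨-, hpos⟩ x y
    have hy := hpos y
    rw [ContinuousLinearMap.reApplyInnerSelf_apply, hSval] at hy
    have hk := hDpos (x - x₀ y)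
    rw [hsq] at hk
    rw [norm_add_sq (𝕜 := ℂ)]
    have h2 : ‖T₁ x‖ ^ 2 = ‖x‖ ^ 2 - re (⟪D x, x⟫_ℂ) := by
      have := hg x; linarith
    rw [h2, hre1]
    linarith
end
end

section
/- Let n be a positive integer and let A be a bounded operator on a complex Hilbert space K such that Σ_{i=0}^n (−1)^i (n choose i) (A*)^i A^i = e₀ ⊗ e₀ for a unit vector e₀ ∈ K, where e₀ ⊗ e₀ is the rank-one projection x ↦ ⟨x, e₀⟩ e₀. Then for every ω in the open unit disk 𝔻 and every x ∈ K with A x = ω x and ⟨x, e₀⟩ = 1, one has ‖x‖² = (1 − |ω|²)^{−n}. -/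
open ContinuousLinearMap

noncomputable section

theorem stmt_15 {K : Type*} [NormedAddCommGroup K] [InnerProductSpace ℂ K]
    [CompleteSpace K]
    (n : ℕ) (hn : 0 < n) (A : K →L[ℂ] K) (e₀ : K) (he₀ : ‖e₀‖ = 1)
    (hsum : (∑ i ∈ Finset.range (n + 1), ((-1 : ℂ) ^ i * (n.choose i : ℂ)) •
        ((ContinuousLinearMap.adjoint A) ^ i * A ^ i)) = (innerSL ℂ e₀).smulRight e₀) :
    ∀ ω ∈ Metric.ball (0 : ℂ) 1, ∀ x : K,
      A x = ω • x → inner ℂ e₀ x = (1 : ℂ) →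
      ‖x‖ ^ 2 = ((1 - ‖ω‖ ^ 2) ^ n)⁻¹ := by
  intro ω hω x hAx hin
  have hAi : ∀ i : ℕ, (A ^ i) x = ω ^ i • x := by
    intro i
    induction i with
    | zero => simp
    | succ k ih =>
      rw [pow_succ, pow_succ, mul_apply_eq_comp, hAx, map_smul, ih, smul_smul, mul_comm]
  have happ := congrArg (fun T : K →L[ℂ] K => (inner ℂ x (T x) : ℂ)) hsum
  simp only [sum_apply, smul_apply, mul_apply_eq_comp, inner_sum, inner_smul_right,
    smulRight_apply, innerSL_apply_apply, hin, one_smul] at happ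
  have hterm : ∀ i ∈ Finset.range (n + 1),
      (-1 : ℂ) ^ i * (n.choose i : ℂ) *
        (inner ℂ x (((adjoint A) ^ i) ((A ^ i) x)) : ℂ) =
      ((-((starRingEnd ℂ) ω * ω)) ^ i * 1 ^ (n - i) * (n.choose i : ℂ)) * (‖x‖ ^ 2 : ℂ) := by
    intro i _
    rw [show ((adjoint A) ^ i) = adjoint (A ^ i) by
      rw [← star_eq_adjoint, ← star_eq_adjoint, star_pow]]
    rw [adjoint_inner_right, hAi, inner_smul_left, inner_smul_right,
      inner_self_eq_norm_sq_to_K]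
    rw [map_pow, one_pow, neg_pow ((starRingEnd ℂ) ω * ω), mul_pow]
    ring_nf
    norm_cast
  rw [Finset.sum_congr rfl hterm, ← Finset.sum_mul, ← add_pow] at happ
  have hx2 : inner ℂ x e₀ = (1 : ℂ) := by
    rw [← inner_conj_symm, hin]; simp
  rw [hx2] at happ
  have hcw : (starRingEnd ℂ) ω * ω = ((‖ω‖ : ℂ)) ^ 2 := by
    rw [mul_comm, Complex.mul_conj']
  rw [hcw] at happ
  have hωlt : ‖ω‖ < 1 := by simpa using hω
  have hpos : (0 : ℝ) < 1 - ‖ω‖ ^ 2 := by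
    nlinarith [norm_nonneg ω]
  have hc : (((1 - ‖ω‖ ^ 2) ^ n * ‖x‖ ^ 2 : ℝ) : ℂ) = 1 := by
    push_cast
    linear_combination happ
  have hreal : (1 - ‖ω‖ ^ 2) ^ n * ‖x‖ ^ 2 = 1 := by exact_mod_cast hc
  rw [mul_comm] at hreal
  exact eq_inv_of_mul_eq_one_left hreal
end
end
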